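/- arXiv:1209.5691 — 3 statements merged into one kernel-verified Lean document; each statement's English description precedes it below -/
import Mathlib

section
/- If X is an (r1,r2)-homogeneously dense metric space and f : X → Y is η-quasisymmetric onto its image, then f(X) is (μ1,μ2)-homogeneously dense for some constants 0 < μ1 ≤ μ2 < 1 depending only on η, r1, r2. -/
open Set

universe u v

/-- The `η`-quasisymmetric image of an `(r1,r2)`-homogeneously dense
metric space is `(μ1,μ2)`-homogeneously dense, with `μ1, μ2` depending only on
`η`, `r1`, `r2`. -/
theorem qs_image_hd (η : ℝ → ℝ) (hη0 : η 0 = 0) (hηmono : StrictMonoOn η (Ici 0))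
    (hηcont : ContinuousOn η (Ici 0)) (hηsurj : SurjOn η (Ici 0) (Ici 0))
    (r1 r2 : ℝ) (hr1 : 0 < r1) (hr12 : r1 ≤ r2) (hr2 : r2 < 1) :
    ∃ μ1 μ2 : ℝ, 0 < μ1 ∧ μ1 ≤ μ2 ∧ μ2 < 1 ∧
      ∀ (X : Type u) (Y : Type v) [MetricSpace X] [MetricSpace Y] (f : X → Y),
        Function.Injective f →
        (∀ a b : X, ∃ x : X, r1 * dist a b ≤ dist a x ∧ dist a x ≤ r2 * dist a b) →
        (∀ x a b : X, x ≠ a → x ≠ b → a ≠ b →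
          dist (f a) (f x) / dist (f b) (f x) ≤ η (dist a x / dist b x)) →
        ∀ ya ∈ Set.range f, ∀ yb ∈ Set.range f, ∃ yx ∈ Set.range f,
          μ1 * dist ya yb ≤ dist ya yx ∧ dist ya yx ≤ μ2 * dist ya yb := by
  have hr20 : 0 < r2 := lt_of_lt_of_le hr1 hr12
  -- choose s with η s = 1/2
  obtain ⟨s, hsmem, hs⟩ := hηsurj (show (1/2:ℝ) ∈ Ici 0 by norm_num)
  have hs0 : 0 ≤ s := hsmem
  have hspos : 0 < s := by
    rcases lt_or_eq_of_le hs0 with h | h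
    · exact h
    · exfalso; rw [← h, hη0] at hs; norm_num at hs
  obtain ⟨n, hn⟩ := exists_pow_lt_of_lt_one hspos hr2
  have hpow2 : r2 ^ (n+1) ≤ s := by
    calc r2 ^ (n+1) ≤ r2 ^ n := pow_le_pow_of_le_one hr20.le hr2.le (Nat.le_succ n)
    _ ≤ s := hn.le
  set t : ℝ := (1/r1) ^ (n+1) with ht
  have htpos : 0 < t := pow_pos (by positivity) _
  set C : ℝ := η t with hC
  have hCpos : 0 < C := by
    have := hηmono (le_refl (0:ℝ)) htpos.le htpos
    rwa [hη0] at this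
  refine ⟨min (1/C) (1/2), 1/2, by positivity, min_le_right _ _, by norm_num, ?_⟩
  intro X Y _ _ f hinj hHD hQS ya hya yb hyb
  obtain ⟨a, rfl⟩ := hya
  obtain ⟨b, rfl⟩ := hyb
  by_cases hab : a = b
  · subst hab
    exact ⟨f a, mem_range_self a, by simp⟩
  -- iterated HD point
  have key : ∀ m : ℕ, ∃ x : X, r1 ^ (m+1) * dist a b ≤ dist a x ∧
      dist a x ≤ r2 ^ (m+1) * dist a b := by
    intro m
    induction m with
    | zero =>
      obtain ⟨x, h1, h2⟩ := hHD a b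
      exact ⟨x, by simpa using h1, by simpa using h2⟩
    | succ k ih =>
      obtain ⟨x, h1, h2⟩ := ih
      obtain ⟨x', h1', h2'⟩ := hHD a x
      refine ⟨x', ?_, ?_⟩
      · calc r1 ^ (k+2) * dist a b = r1 * (r1 ^ (k+1) * dist a b) := by ring
        _ ≤ r1 * dist a x := by nlinarith
        _ ≤ dist a x' := h1'
      · calc dist a x' ≤ r2 * dist a x := h2'
        _ ≤ r2 * (r2 ^ (k+1) * dist a b) := by nlinarith
        _ = r2 ^ (k+2) * dist a b := by ring
  obtain ⟨x, hx1, hx2⟩ := key n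
  have hD : 0 < dist a b := dist_pos.mpr hab
  have hr1n : 0 < r1 ^ (n+1) := pow_pos hr1 _
  have hax : 0 < dist a x := lt_of_lt_of_le (by positivity) hx1
  have hxa : x ≠ a := by
    intro h; subst h; simp at hax
  have haxlt : dist a x < dist a b := by
    have h1 : r2 ^ (n+1) < 1 := pow_lt_one₀ hr20.le hr2 (Nat.succ_ne_zero n)
    calc dist a x ≤ r2 ^ (n+1) * dist a b := hx2
    _ < 1 * dist a b := by nlinarith
    _ = dist a b := one_mul _
  have hxb : x ≠ b := by
    intro h; subst h; exact lt_irrefl _ haxlt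
  have hfba : 0 < dist (f b) (f a) := dist_pos.mpr fun h => hab (hinj h).symm
  have hfxa : 0 < dist (f x) (f a) := dist_pos.mpr fun h => hxa (hinj h)
  -- upper bound
  have hub := hQS a x b (fun h => hxa h.symm) hab hxb
  have harg1 : dist x a / dist b a ≤ s := by
    rw [div_le_iff₀ (by rwa [dist_comm])]
    calc dist x a = dist a x := dist_comm x a
    _ ≤ r2 ^ (n+1) * dist a b := hx2
    _ ≤ s * dist b a := by rw [dist_comm b a]; nlinarith
  have hη1 : η (dist x a / dist b a) ≤ 1/2 := by
    rw [← hs]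
    rcases eq_or_lt_of_le harg1 with h | h
    · rw [h]
    · exact (hηmono (div_nonneg dist_nonneg dist_nonneg) hs0 h).le
  have hub2 : dist (f x) (f a) ≤ 1/2 * dist (f b) (f a) := by
    have := le_trans hub hη1
    rw [div_le_iff₀ hfba] at this
    linarith
  -- lower bound
  have hlb := hQS a b x hab (fun h => hxa h.symm) (fun h => hxb h.symm)
  have harg2 : dist b a / dist x a ≤ t := by
    rw [div_le_iff₀ (by rwa [dist_comm])]
    have h1 : t * (r1 ^ (n+1)) = 1 := by
      rw [ht, ← mul_pow]
      field_simp
      exact one_pow _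
    calc dist b a = 1 * dist a b := by rw [one_mul, dist_comm]
    _ = t * (r1 ^ (n+1) * dist a b) := by rw [← h1]; ring
    _ ≤ t * dist a x := by nlinarith
    _ = t * dist x a := by rw [dist_comm]
  have hη2 : η (dist b a / dist x a) ≤ C := by
    rcases eq_or_lt_of_le harg2 with h | h
    · rw [h]
    · exact (hηmono (div_nonneg dist_nonneg dist_nonneg) htpos.le h).le
  have hlb2 : dist (f b) (f a) ≤ C * dist (f x) (f a) := by
    have := le_trans hlb hη2
    rw [div_le_iff₀ hfxa] at this
    linarith
  refine ⟨f x, mem_range_self x, ?_, ?_⟩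
  · rw [dist_comm (f a) (f b), dist_comm (f a) (f x)]
    calc min (1/C) (1/2) * dist (f b) (f a) ≤ (1/C) * dist (f b) (f a) := by
          apply mul_le_mul_of_nonneg_right (min_le_left _ _) hfba.le
    _ ≤ (1/C) * (C * dist (f x) (f a)) := by
          apply mul_le_mul_of_nonneg_left hlb2 (by positivity)
    _ = dist (f x) (f a) := by field_simp
  · rw [dist_comm (f a) (f b), dist_comm (f a) (f x)]
    exact hub2
end

section
/- Every ball B(x0, r) in a Banach space E is a 2-uniform domain: each pair of points z1, z2 ∈ B(x0,r) can be joined by a rectifiable arc α in B(x0,r) with ℓ(α) ≤ 2|z1 − z2| and min_{j=1,2} ℓ(α[z_j, z]) ≤ 2·d(z, ∂B(x0,r)) for all z ∈ α. -/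
open Metric Set

open intervalIntegral

set_option maxHeartbeats 1600000

noncomputable def myCurve {E : Type*} [NormedAddCommGroup E] [NormedSpace ℝ E]
    (x0 u1 u2 : E) (μ : ℝ) : ℝ → E :=
  fun t => x0 + ((1 - t) * (1 - μ * t)) • u1 + (t * (1 - μ * (1 - t))) • u2

noncomputable def myCurveD {E : Type*} [NormedAddCommGroup E] [NormedSpace ℝ E]
    (u1 u2 : E) (μ : ℝ) : ℝ → E :=
  fun t => (2 * μ * t - 1 - μ) • u1 + (1 - μ + 2 * μ * t) • u2

lemma myCurveHasDeriv {E : Type*} [NormedAddCommGroup E] [NormedSpace ℝ E]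
    (x0 u1 u2 : E) (μ : ℝ) (t : ℝ) :
    HasDerivAt (myCurve x0 u1 u2 μ) (myCurveD u1 u2 μ t) t := by
  have hA : HasDerivAt (fun t : ℝ => (1 - t) * (1 - μ * t)) (2 * μ * t - 1 - μ) t := by
    have h := ((hasDerivAt_id t).const_sub 1).mul (((hasDerivAt_id t).const_mul μ).const_sub 1)
    refine h.congr_deriv ?_
    simp only [id_eq]
    ring
  have hB : HasDerivAt (fun t : ℝ => t * (1 - μ * (1 - t))) (1 - μ + 2 * μ * t) t := by
    have h := (hasDerivAt_id t).mul
      ((((hasDerivAt_id t).const_sub 1).const_mul μ).const_sub 1)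
    refine h.congr_deriv ?_
    simp only [id_eq]
    ring
  exact ((hA.smul_const u1).const_add x0).add (hB.smul_const u2)

lemma myCurveDB1 {E : Type*} [NormedAddCommGroup E] [NormedSpace ℝ E]
    (u1 u2 : E) (μ t : ℝ) :
    ‖myCurveD u1 u2 μ t‖ ≤ ‖u2 - u1‖ + |μ * (2 * t - 1)| * ‖u1 + u2‖ := by
  have he : myCurveD u1 u2 μ t = (u2 - u1) + (μ * (2 * t - 1)) • (u1 + u2) := by
    simp only [myCurveD, smul_add, smul_sub, sub_smul, add_smul]
    module
  rw [he]
  calc ‖(u2 - u1) + (μ * (2 * t - 1)) • (u1 + u2)‖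
      ≤ ‖u2 - u1‖ + ‖(μ * (2 * t - 1)) • (u1 + u2)‖ := norm_add_le _ _
    _ = ‖u2 - u1‖ + |μ * (2 * t - 1)| * ‖u1 + u2‖ := by
        rw [norm_smul, Real.norm_eq_abs]

lemma myIntegralNormLe {E : Type*} [NormedAddCommGroup E] (g : ℝ → E) (hg : Continuous g)
    {p q α β : ℝ} (hαβ : α ≤ β) (h : ∀ t ∈ Icc α β, ‖g t‖ ≤ p + q * t) :
    (∫ t in α..β, ‖g t‖) ≤ p * (β - α) + q * (β ^ 2 - α ^ 2) / 2 := by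
  have h1 : (∫ t in α..β, ‖g t‖) ≤ ∫ t in α..β, (p + q * t) :=
    intervalIntegral.integral_mono_on hαβ (hg.norm.intervalIntegrable _ _)
      ((continuous_const.add (continuous_const.mul continuous_id')).intervalIntegrable _ _) h
  refine h1.trans_eq ?_
  rw [intervalIntegral.integral_add (f := fun _ => p) (g := fun t => q * t) (intervalIntegrable_const)
    ((continuous_const.mul continuous_id').intervalIntegrable _ _),
    intervalIntegral.integral_const, intervalIntegral.integral_const_mul, integral_id]
  simp [smul_eq_mul]; ring

lemma myInfDistFrontier {E : Type*} [NormedAddCommGroup E] [NormedSpace ℝ E] [Nontrivial E]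
    {x0 z : E} {r : ℝ} (hr : 0 < r) :
    r - ‖z - x0‖ ≤ infDist z (frontier (ball x0 r)) := by
  rw [frontier_ball x0 hr.ne']
  by_contra hc
  push_neg at hc
  obtain ⟨y, hy, hlt⟩ := (infDist_lt_iff (NormedSpace.sphere_nonempty.mpr hr.le)).mp hc
  have h1 : dist y x0 = r := by
    rw [dist_eq_norm]; exact mem_sphere_iff_norm.mp hy
  have h2 : dist y x0 ≤ dist y z + dist z x0 := dist_triangle _ _ _
  rw [dist_comm y z, dist_eq_norm z x0] at h2
  linarith

lemma myMaster {E : Type*} [NormedAddCommGroup E] [NormedSpace ℝ E] [Nontrivial E]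
    (x0 u1 u2 : E) (r μ pL qL pR qR : ℝ) (hr : 0 < r)
    (h1 : ‖u1‖ < r) (h2 : ‖u2‖ < r) (hμ0 : 0 ≤ μ) (hμ1 : μ ≤ 1)
    (hμσ : μ * ‖u1 + u2‖ ≤ 2 * ‖u2 - u1‖)
    (hBL : ∀ t ∈ Icc (0:ℝ) (1/2), ‖myCurveD u1 u2 μ t‖ ≤ pL + qL * t)
    (hBR : ∀ t ∈ Icc (1/2:ℝ) 1, ‖myCurveD u1 u2 μ t‖ ≤ pR + qR * t)
    (hIL : ∀ s ∈ Icc (0:ℝ) (1/2), pL * s + qL * s ^ 2 / 2 ≤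
      2 * (r - ((1-s)*(1-μ*s)*‖u1‖ + s*(1-μ*(1-s))*‖u2‖)))
    (hIR : ∀ s ∈ Icc (1/2:ℝ) 1, pR * (1 - s) + qR * (1 - s ^ 2) / 2 ≤
      2 * (r - ((1-s)*(1-μ*s)*‖u1‖ + s*(1-μ*(1-s))*‖u2‖))) :
    ∃ γ : ℝ → E,
      ContDiffOn ℝ 1 γ (Icc 0 1) ∧ γ 0 = x0 + u1 ∧ γ 1 = x0 + u2 ∧
      (∀ t ∈ Icc (0:ℝ) 1, γ t ∈ ball x0 r) ∧
      (∫ t in (0:ℝ)..1, ‖derivWithin γ (Icc 0 1) t‖) ≤ 2 * dist (x0+u1) (x0+u2) ∧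
      ∀ s ∈ Icc (0:ℝ) 1,
        min (∫ t in (0:ℝ)..s, ‖derivWithin γ (Icc 0 1) t‖)
            (∫ t in s..(1:ℝ), ‖derivWithin γ (Icc 0 1) t‖)
          ≤ 2 * infDist (γ s) (frontier (ball x0 r)) := by
  set d := ‖u2 - u1‖ with hd
  set σ := ‖u1 + u2‖ with hσ
  set γ := myCurve x0 u1 u2 μ with hγ
  set g := myCurveD u1 u2 μ with hg
  have hgc : Continuous g := by
    rw [hg]; unfold myCurveD; fun_prop
  have hγcd : ContDiff ℝ 1 γ := by
    rw [hγ]; unfold myCurve; fun_prop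
  have hdw : ∀ t ∈ Icc (0:ℝ) 1, derivWithin γ (Icc 0 1) t = g t := fun t ht =>
    ((myCurveHasDeriv x0 u1 u2 μ t).hasDerivWithinAt).derivWithin
      ((uniqueDiffOn_Icc zero_lt_one) t ht)
  have hcongr : ∀ a b : ℝ, a ∈ Icc (0:ℝ) 1 → b ∈ Icc (0:ℝ) 1 →
      (∫ t in a..b, ‖derivWithin γ (Icc 0 1) t‖) = ∫ t in a..b, ‖g t‖ := fun a b ha hb =>
    intervalIntegral.integral_congr (fun t ht => by rw [hdw t (uIcc_subset_Icc ha hb ht)])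
  have hAB : ∀ t ∈ Icc (0:ℝ) 1,
      ‖γ t - x0‖ ≤ (1-t)*(1-μ*t)*‖u1‖ + t*(1-μ*(1-t))*‖u2‖ := by
    rintro t ⟨ht0, ht1⟩
    have e : γ t - x0 = ((1-t)*(1-μ*t)) • u1 + (t*(1-μ*(1-t))) • u2 := by
      rw [hγ]; unfold myCurve; abel
    have c1 : 0 ≤ (1-t)*(1-μ*t) := mul_nonneg (by linarith) (by nlinarith)
    have c2 : 0 ≤ t*(1-μ*(1-t)) := mul_nonneg ht0 (by nlinarith)
    rw [e]
    refine (norm_add_le _ _).trans ?_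
    rw [norm_smul, norm_smul, Real.norm_eq_abs, Real.norm_eq_abs,
      abs_of_nonneg c1, abs_of_nonneg c2]
  have hsum : ∀ t ∈ Icc (0:ℝ) 1, (1-t)*(1-μ*t) + t*(1-μ*(1-t)) ≤ 1 := by
    rintro t ⟨ht0, ht1⟩
    nlinarith [mul_nonneg hμ0 (mul_nonneg ht0 (by linarith : (0:ℝ) ≤ 1 - t))]
  have hmem : ∀ t ∈ Icc (0:ℝ) 1, γ t ∈ ball x0 r := by
    intro t ht
    rw [mem_ball_iff_norm]
    have hab := hAB t ht
    obtain ⟨ht0, ht1⟩ := ht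
    have c1 : 0 ≤ (1-t)*(1-μ*t) := mul_nonneg (by linarith) (by nlinarith)
    have c2 : 0 ≤ t*(1-μ*(1-t)) := mul_nonneg ht0 (by nlinarith)
    have hs := hsum t ⟨ht0, ht1⟩
    have hM : max ‖u1‖ ‖u2‖ < r := max_lt h1 h2
    have hM0 : 0 ≤ max ‖u1‖ ‖u2‖ := le_trans (norm_nonneg u1) (le_max_left _ _)
    calc ‖γ t - x0‖ ≤ (1-t)*(1-μ*t)*‖u1‖ + t*(1-μ*(1-t))*‖u2‖ := hab
      _ ≤ (1-t)*(1-μ*t)*(max ‖u1‖ ‖u2‖) + t*(1-μ*(1-t))*(max ‖u1‖ ‖u2‖) := by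
          gcongr
          · exact le_max_left _ _
          · exact le_max_right _ _
      _ ≤ max ‖u1‖ ‖u2‖ := by
          rw [← add_mul]
          simpa using mul_le_mul_of_nonneg_right hs hM0
      _ < r := hM
  have hint : ∀ a b : ℝ, IntervalIntegrable (fun t => ‖g t‖) MeasureTheory.volume a b :=
    fun a b => (hgc.norm).intervalIntegrable _ _
  -- total length bound via B1
  have htL : ∀ t ∈ Icc (0:ℝ) (1/2), ‖g t‖ ≤ (d + μ * σ) + (-(2 * μ * σ)) * t := by
    rintro t ⟨ht0, ht1⟩
    refine (myCurveDB1 u1 u2 μ t).trans ?_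
    have habs : |μ * (2*t-1)| = μ * (1 - 2*t) := by
      rw [abs_of_nonpos (by nlinarith)]; ring
    rw [habs, ← hd, ← hσ]
    nlinarith [norm_nonneg (u1 + u2)]
  have htR : ∀ t ∈ Icc (1/2:ℝ) 1, ‖g t‖ ≤ (d - μ * σ) + (2 * μ * σ) * t := by
    rintro t ⟨ht0, ht1⟩
    refine (myCurveDB1 u1 u2 μ t).trans ?_
    have habs : |μ * (2*t-1)| = μ * (2*t - 1) := by
      rw [abs_of_nonneg (by nlinarith)]
    rw [habs, ← hd, ← hσ]
    nlinarith [norm_nonneg (u1 + u2)]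
  have hLen1 := myIntegralNormLe g hgc (by norm_num : (0:ℝ) ≤ 1/2) htL
  have hLen2 := myIntegralNormLe g hgc (by norm_num : (1/2:ℝ) ≤ 1) htR
  have hsplit : (∫ t in (0:ℝ)..1, ‖g t‖)
      = (∫ t in (0:ℝ)..(1/2), ‖g t‖) + ∫ t in (1/2:ℝ)..1, ‖g t‖ :=
    (intervalIntegral.integral_add_adjacent_intervals (hint _ _) (hint _ _)).symm
  have hdist : dist (x0+u1) (x0+u2) = d := by
    rw [dist_eq_norm, show x0+u1-(x0+u2) = u1-u2 by abel, norm_sub_rev]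
  have hγ0 : γ 0 = x0 + u1 := by
    rw [hγ]
    show x0 + ((1-(0:ℝ))*(1-μ*0)) • u1 + ((0:ℝ)*(1-μ*(1-0))) • u2 = x0 + u1
    norm_num
  have hγ1 : γ 1 = x0 + u2 := by
    rw [hγ]
    show x0 + ((1-(1:ℝ))*(1-μ*1)) • u1 + ((1:ℝ)*(1-μ*(1-1))) • u2 = x0 + u2
    norm_num
  refine ⟨γ, hγcd.contDiffOn, hγ0, hγ1, hmem, ?_, ?_⟩
  · rw [hcongr 0 1 (by norm_num) (by norm_num), hsplit, hdist]
    have hσ0 : 0 ≤ σ := norm_nonneg _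
    nlinarith [hLen1, hLen2, hμσ]
  · rintro s ⟨hs0, hs1⟩
    have hdepth : 2*(r - ((1-s)*(1-μ*s)*‖u1‖ + s*(1-μ*(1-s))*‖u2‖))
        ≤ 2 * infDist (γ s) (frontier (ball x0 r)) := by
      have ha := hAB s ⟨hs0, hs1⟩
      have hb := myInfDistFrontier (x0 := x0) (z := γ s) hr
      linarith
    rcases le_or_gt s (1/2) with hc | hc
    · have hIs : (∫ t in (0:ℝ)..s, ‖derivWithin γ (Icc 0 1) t‖) = ∫ t in (0:ℝ)..s, ‖g t‖ :=
        hcongr 0 s (by norm_num) ⟨hs0, hs1⟩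
      have hb := myIntegralNormLe g hgc hs0
        (fun t ht => hBL t ⟨ht.1, ht.2.trans hc⟩)
      refine le_trans (min_le_left _ _) ?_
      rw [hIs]
      refine hb.trans (le_trans ?_ hdepth)
      have h' := hIL s ⟨hs0, hc⟩
      have he : pL*(s-0)+qL*(s^2-0^2)/2 = pL*s + qL*s^2/2 := by ring
      linarith
    · have hIs : (∫ t in s..(1:ℝ), ‖derivWithin γ (Icc 0 1) t‖) = ∫ t in s..(1:ℝ), ‖g t‖ :=
        hcongr s 1 ⟨hs0, hs1⟩ (by norm_num)
      have hb := myIntegralNormLe g hgc hs1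
        (fun t ht => hBR t ⟨hc.le.trans ht.1, ht.2⟩)
      refine le_trans (min_le_right _ _) ?_
      rw [hIs]
      refine hb.trans (le_trans ?_ hdepth)
      have h' := hIR s ⟨hc.le, hs1⟩
      have he : pR*(1-s)+qR*(1^2-s^2)/2 = pR*(1-s) + qR*(1-s^2)/2 := by ring
      linarith

lemma myCurveDB2 {E : Type*} [NormedAddCommGroup E] [NormedSpace ℝ E]
    (u1 u2 : E) {t : ℝ} (ht0 : 0 ≤ t) (ht1 : t ≤ 1) :
    ‖myCurveD u1 u2 1 t‖ ≤ 2*‖u1‖ + (2*(‖u2‖-‖u1‖)) * t := by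
  have he : myCurveD u1 u2 1 t = (2*1*t - 1 - 1) • u1 + (1 - 1 + 2*1*t) • u2 := rfl
  rw [he]
  calc ‖(2*1*t - 1 - 1) • u1 + (1 - 1 + 2*1*t) • u2‖
      ≤ ‖(2*1*t - 1 - 1) • u1‖ + ‖(1 - 1 + 2*1*t) • u2‖ := norm_add_le _ _
    _ = |2*1*t - 1 - 1| * ‖u1‖ + |1 - 1 + 2*1*t| * ‖u2‖ := by
        rw [norm_smul, norm_smul, Real.norm_eq_abs, Real.norm_eq_abs]
    _ = (2 - 2*t) * ‖u1‖ + (2*t) * ‖u2‖ := by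
        rw [show |2*1*t - 1 - 1| = 2 - 2*t by rw [abs_of_nonpos (by linarith)]; ring,
          show |1 - 1 + 2*1*t| = 2*t by rw [abs_of_nonneg (by linarith)]; ring]
    _ = 2*‖u1‖ + (2*(‖u2‖-‖u1‖)) * t := by ring

/-- Every ball in a Banach space is a `2`-uniform domain: any two points
can be joined by a rectifiable arc in the ball of length at most `2|z1-z2|` such that for
every point `z` on the arc, the shorter subarc to an endpoint has length at most
`2·dist(z, ∂B)`. -/
theorem ball_two_uniform {E : Type*} [NormedAddCommGroup E] [NormedSpace ℝ E]
    [CompleteSpace E] (hdim : 2 ≤ Module.rank ℝ E) (x0 : E) (r : ℝ) (hr : 0 < r) :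
    ∀ z1 ∈ ball x0 r, ∀ z2 ∈ ball x0 r, ∃ γ : ℝ → E,
      ContDiffOn ℝ 1 γ (Icc 0 1) ∧ γ 0 = z1 ∧ γ 1 = z2 ∧
      (∀ t ∈ Icc (0:ℝ) 1, γ t ∈ ball x0 r) ∧
      (∫ t in (0:ℝ)..1, ‖derivWithin γ (Icc 0 1) t‖) ≤ 2 * dist z1 z2 ∧
      ∀ s ∈ Icc (0:ℝ) 1,
        min (∫ t in (0:ℝ)..s, ‖derivWithin γ (Icc 0 1) t‖)
            (∫ t in s..(1:ℝ), ‖derivWithin γ (Icc 0 1) t‖)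
          ≤ 2 * infDist (γ s) (frontier (ball x0 r)) := by
  have hnt : Nontrivial E :=
    rank_pos_iff_nontrivial.mp (lt_of_lt_of_le (by norm_num) hdim)
  intro z1 hz1 z2 hz2
  by_cases hzz : z1 = z2
  · subst hzz
    have hdw : ∀ t ∈ Icc (0:ℝ) 1, derivWithin (fun _ : ℝ => z1) (Icc (0:ℝ) 1) t = 0 :=
      fun t ht => congrFun (derivWithin_const _ _) t
    have hcongr : ∀ a b : ℝ, a ∈ Icc (0:ℝ) 1 → b ∈ Icc (0:ℝ) 1 →
        (∫ t in a..b, ‖derivWithin (fun _ : ℝ => z1) (Icc (0:ℝ) 1) t‖) = 0 := by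
      intro a b ha hb
      have : (∫ t in a..b, ‖derivWithin (fun _ : ℝ => z1) (Icc (0:ℝ) 1) t‖)
          = ∫ t in a..b, (0:ℝ) :=
        intervalIntegral.integral_congr (fun t ht => by
          rw [hdw t (uIcc_subset_Icc ha hb ht)]; simp)
      rw [this, intervalIntegral.integral_zero]
    refine ⟨fun _ => z1, contDiffOn_const, rfl, rfl, fun t _ => hz1, ?_, ?_⟩
    · rw [hcongr 0 1 (by norm_num) (by norm_num)]
      positivity
    · rintro s ⟨hs0, hs1⟩
      rw [hcongr 0 s (by norm_num) ⟨hs0, hs1⟩, hcongr s 1 ⟨hs0, hs1⟩ (by norm_num)]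
      simp only [min_self]
      have := infDist_nonneg (x := z1) (s := frontier (ball x0 r))
      linarith
  · have h1 : ‖z1 - x0‖ < r := mem_ball_iff_norm.mp hz1
    have h2 : ‖z2 - x0‖ < r := mem_ball_iff_norm.mp hz2
    set u1 := z1 - x0 with hu1
    set u2 := z2 - x0 with hu2
    have hd0 : 0 < ‖u2 - u1‖ := by
      have he : u2 - u1 = z2 - z1 := by rw [hu1, hu2]; abel
      rw [he]
      exact norm_pos_iff.mpr (sub_ne_zero_of_ne (fun h => hzz h.symm))
    set d := ‖u2 - u1‖ with hd
    set σ := ‖u1 + u2‖ with hσ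
    have hσ0 : 0 ≤ σ := norm_nonneg _
    have hσn : σ ≤ ‖u1‖ + ‖u2‖ := norm_add_le _ _
    have hmain : ∃ γ : ℝ → E,
        ContDiffOn ℝ 1 γ (Icc 0 1) ∧ γ 0 = x0 + u1 ∧ γ 1 = x0 + u2 ∧
        (∀ t ∈ Icc (0:ℝ) 1, γ t ∈ ball x0 r) ∧
        (∫ t in (0:ℝ)..1, ‖derivWithin γ (Icc 0 1) t‖) ≤ 2 * dist (x0+u1) (x0+u2) ∧
        ∀ s ∈ Icc (0:ℝ) 1,
          min (∫ t in (0:ℝ)..s, ‖derivWithin γ (Icc 0 1) t‖)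
              (∫ t in s..(1:ℝ), ‖derivWithin γ (Icc 0 1) t‖)
            ≤ 2 * infDist (γ s) (frontier (ball x0 r)) := by
      by_cases hσc : σ ≤ 2 * d
      · -- μ = 1
        apply myMaster x0 u1 u2 r 1 (2*‖u1‖) (2*(‖u2‖-‖u1‖)) (2*‖u1‖) (2*(‖u2‖-‖u1‖))
          hr h1 h2 zero_le_one le_rfl
        · rwa [one_mul]
        · exact fun t ht => myCurveDB2 u1 u2 ht.1 (by linarith [ht.2])
        · exact fun t ht => myCurveDB2 u1 u2 (by linarith [ht.1]) ht.2
        · rintro s ⟨hs0, hs1⟩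
          nlinarith [mul_nonneg (mul_nonneg hs0 hs0) (sub_nonneg.mpr h2.le),
            mul_nonneg (sub_nonneg.mpr h1.le) (sq_nonneg (1-s)),
            mul_nonneg (sub_nonneg.mpr h1.le) (mul_nonneg hs0 (by linarith : (0:ℝ) ≤ 1 - 2*s)),
            mul_nonneg (mul_nonneg hs0 (by linarith : (0:ℝ) ≤ 1 - 2*s)) hr.le]
        · rintro s ⟨hs0, hs1⟩
          nlinarith [mul_nonneg (sub_nonneg.mpr h1.le) (sq_nonneg (1-s)),
            mul_nonneg (sub_nonneg.mpr h2.le) (by nlinarith : (0:ℝ) ≤ 1 + s^2),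
            mul_nonneg (mul_nonneg (by linarith : (0:ℝ) ≤ 2*s - 1) (by linarith : (0:ℝ) ≤ 1 - s)) hr.le]
      · -- μ = 2d/σ
        push_neg at hσc
        have hσpos : 0 < σ := lt_of_le_of_lt (by positivity) hσc
        set μ := 2 * d / σ with hμ
        have hμ0 : 0 ≤ μ := by positivity
        have hμ1 : μ ≤ 1 := (div_le_one hσpos).mpr hσc.le
        have hμσ : μ * σ = 2 * d := by
          rw [hμ]; field_simp
        have hμn : 2 * d ≤ μ * (‖u1‖ + ‖u2‖) := by
          rw [← hμσ]
          exact mul_le_mul_of_nonneg_left hσn hμ0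
        apply myMaster x0 u1 u2 r μ (3*d) (-(4*d)) (-d) (4*d) hr h1 h2 hμ0 hμ1
        · rw [hμσ]
        · rintro t ⟨ht0, ht1⟩
          refine (myCurveDB1 u1 u2 μ t).trans ?_
          rw [show |μ * (2*t-1)| = μ * (1 - 2*t) by
            rw [abs_of_nonpos (by nlinarith)]; ring, ← hd, ← hσ]
          have he : d + μ * (1 - 2*t) * σ = d + (1-2*t) * (μ * σ) := by ring
          rw [he, hμσ]
          nlinarith
        · rintro t ⟨ht0, ht1⟩
          refine (myCurveDB1 u1 u2 μ t).trans ?_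
          rw [show |μ * (2*t-1)| = μ * (2*t - 1) by
            rw [abs_of_nonneg (by nlinarith)], ← hd, ← hσ]
          have he : d + μ * (2*t-1) * σ = d + (2*t-1) * (μ * σ) := by ring
          rw [he, hμσ]
          nlinarith
        · rintro s ⟨hs0, hs1⟩
          nlinarith [mul_nonneg (mul_nonneg hs0 (by linarith : (0:ℝ) ≤ 1 - s))
              (sub_nonneg.mpr hμn),
            mul_nonneg (mul_nonneg hd0.le hs0) (by linarith : (0:ℝ) ≤ 1 - 2*s),
            mul_nonneg (by linarith : (0:ℝ) ≤ 1 - s) (sub_nonneg.mpr h1.le),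
            mul_nonneg hs0 (sub_nonneg.mpr h2.le)]
        · rintro s ⟨hs0, hs1⟩
          have hs0' : (0:ℝ) ≤ s := by linarith
          nlinarith [mul_nonneg (mul_nonneg hs0' (by linarith : (0:ℝ) ≤ 1 - s))
              (sub_nonneg.mpr hμn),
            mul_nonneg (mul_nonneg hd0.le (by linarith : (0:ℝ) ≤ 1 - s))
              (by linarith : (0:ℝ) ≤ 2*s - 1),
            mul_nonneg (by linarith : (0:ℝ) ≤ 1 - s) (sub_nonneg.mpr h1.le),
            mul_nonneg hs0' (sub_nonneg.mpr h2.le)]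
    have e1 : x0 + u1 = z1 := by rw [hu1]; abel
    have e2 : x0 + u2 = z2 := by rw [hu2]; abel
    rw [e1, e2] at hmain
    exact hmain
end

section
/- Let D ⊊ E, D' ⊊ E' be domains in Banach spaces, f : D → D' a homeomorphism with k_{D'}(f(x),f(y)) ≤ M·k_D(x,y) for all x,y ∈ D (M-quasihyperbolic upper bound), and suppose there is M1 ≥ 1 with d_{D'}(f(z)) ≤ M1·d_D(z) for all z ∈ D. Then for all z1, z2 ∈ D with |z1 − z2| ≤ d_D(z1)/(2M), one has |f(z1) − f(z2)| ≤ 4M·M1·|z1 − z2|. -/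
open Metric Set

variable {E : Type*} [NormedAddCommGroup E] [NormedSpace ℝ E] [CompleteSpace E]

/-- Distance from a point to the boundary of `D`. -/
noncomputable def distBd (D : Set E) (z : E) : ℝ := infDist z (frontier D)

/-- A (C¹, hence rectifiable) path in `D` from `x` to `y`, parametrized on `[0,1]`. -/
def IsQHPath (D : Set E) (x y : E) (γ : ℝ → E) : Prop :=
  ContDiffOn ℝ 1 γ (Icc 0 1) ∧ γ 0 = x ∧ γ 1 = y ∧ ∀ t ∈ Icc (0:ℝ) 1, γ t ∈ D

/-- Quasihyperbolic length of a path: ∫ |dz|/d_D(z). -/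
noncomputable def qhLength (D : Set E) (γ : ℝ → E) : ℝ :=
  ∫ t in (0:ℝ)..1, ‖derivWithin γ (Icc 0 1) t‖ / distBd D (γ t)

/-- The quasihyperbolic distance: infimum of quasihyperbolic lengths of paths in `D`. -/
noncomputable def qhDist (D : Set E) (x y : E) : ℝ :=
  sInf {l | ∃ γ : ℝ → E, IsQHPath D x y γ ∧ qhLength D γ = l}

/-- The distance ratio metric `j_D`. -/
noncomputable def jDist (D : Set E) (x y : E) : ℝ :=
  Real.log (1 + dist x y / min (distBd D x) (distBd D y))

set_option linter.unusedSectionVars false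
set_option maxHeartbeats 1000000

lemma frontier_ne {D : Set E} (hne : D.Nonempty) (hu : D ≠ univ) : (frontier D).Nonempty :=
  nonempty_frontier_iff.mpr ⟨hne, hu⟩

lemma distBd_pos {D : Set E} (hD : IsOpen D) (hu : D ≠ univ) {z : E} (hz : z ∈ D) :
    0 < distBd D z := by
  refine (isClosed_frontier.notMem_iff_infDist_pos (frontier_ne ⟨z, hz⟩ hu)).mp ?_
  intro hzf
  exact (hD.frontier_eq ▸ hzf).2 hz

lemma ball_distBd_subset {D : Set E} (hD : IsOpen D) {z : E} (hz : z ∈ D) :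
    ball z (distBd D z) ⊆ D := by
  intro y hy
  by_contra hyD
  rcases (segment ℝ z y ∩ frontier D).eq_empty_or_nonempty with hem | ⟨w, hw1, hw2⟩
  · have h1 : segment ℝ z y ⊆ interior D ∪ (closure D)ᶜ := by
      intro w hw
      by_cases hwc : w ∈ closure D
      · have hnf : w ∉ frontier D := fun h => (eq_empty_iff_forall_notMem).mp hem w ⟨hw, h⟩
        rw [frontier, mem_diff] at hnf
        left; simpa [hwc] using hnf
      · exact Or.inr hwc
    have h2 : segment ℝ z y ⊆ interior D :=
      (convex_segment z y).isPreconnected.subset_left_of_subset_union isOpen_interior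
        isClosed_closure.isOpen_compl
        (disjoint_compl_right.mono_left interior_subset_closure) h1
        ⟨z, left_mem_segment ℝ z y, by rwa [hD.interior_eq]⟩
    exact hyD (interior_subset (h2 (right_mem_segment ℝ z y)))
  · have hle : dist z w ≤ dist z y := by
      have := (convex_closedBall z (dist z y)).segment_subset
        (mem_closedBall_self dist_nonneg) (mem_closedBall'.mpr le_rfl) hw1
      simpa [dist_comm] using this
    exact absurd (infDist_le_dist_of_mem hw2)
      (not_le.mpr (lt_of_le_of_lt hle (mem_ball'.mp hy)))

lemma distBd_le_add {D : Set E} (x y : E) : distBd D x ≤ distBd D y + dist x y :=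
  infDist_le_infDist_add_dist



lemma qhLength_lower {D : Set E} (hD : IsOpen D) (hu : D ≠ univ) {x y : E} (hx : x ∈ D)
    {γ : ℝ → E} (hγ : IsQHPath D x y γ) :
    Real.log (1 + dist x y / distBd D x) ≤ qhLength D γ := by
  obtain ⟨hsm, h0, h1, hmem⟩ := hγ
  set d0 := distBd D x with hd0def
  have hd0 : 0 < d0 := distBd_pos hD hu hx
  have hudiff : UniqueDiffOn ℝ (Icc (0:ℝ) 1) := uniqueDiffOn_Icc (by norm_num)
  set g : ℝ → ℝ := fun t => ‖derivWithin γ (Icc 0 1) t‖ with hgdef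
  have hdc : ContinuousOn (derivWithin γ (Icc 0 1)) (Icc 0 1) :=
    hsm.continuousOn_derivWithin hudiff le_rfl
  have hgc : ContinuousOn g (Icc 0 1) := hdc.norm
  have hgnn : ∀ t, 0 ≤ g t := fun t => norm_nonneg _
  set s : ℝ → ℝ := fun t => ∫ u in (0:ℝ)..t, g u with hsdef
  have hs0 : s 0 = 0 := intervalIntegral.integral_same
  have hsnn : ∀ t ∈ Icc (0:ℝ) 1, 0 ≤ s t := fun t ht =>
    intervalIntegral.integral_nonneg ht.1 (fun u _ => hgnn u)
  have hgint : ∀ t ∈ Icc (0:ℝ) 1, IntervalIntegrable g MeasureTheory.volume 0 t := fun t ht =>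
    (hgc.mono (Icc_subset_Icc le_rfl ht.2)).intervalIntegrable_of_Icc ht.1
  have hscont : ContinuousOn s (Icc 0 1) := by
    have := intervalIntegral.continuousOn_primitive_interval (a := (0:ℝ)) (b := (1:ℝ))
      (μ := MeasureTheory.volume) (f := g)
      ((hgc.mono (by rw [uIcc_of_le zero_le_one])).integrableOn_compact isCompact_uIcc)
    rwa [uIcc_of_le zero_le_one] at this
  -- ‖γ t - x‖ ≤ s t
  have hγsub : ∀ t ∈ Icc (0:ℝ) 1, ‖γ t - x‖ ≤ s t := by
    intro t ht
    have hder : ∀ u ∈ Ioo (0:ℝ) t, HasDerivWithinAt γ (derivWithin γ (Icc 0 1) u) (Ioi u) u := by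
      intro u hu'
      have humem : u ∈ Icc (0:ℝ) 1 := ⟨hu'.1.le, hu'.2.le.trans ht.2⟩
      have := (hsm.differentiableOn one_ne_zero u humem).hasDerivWithinAt
      exact this.mono_of_mem_nhdsWithin (Icc_mem_nhdsGT_of_mem ⟨hu'.1.le, lt_of_lt_of_le hu'.2 ht.2⟩)
    have hint : IntervalIntegrable (derivWithin γ (Icc 0 1)) MeasureTheory.volume 0 t :=
      (hdc.mono (Icc_subset_Icc le_rfl ht.2)).intervalIntegrable_of_Icc ht.1
    have heq : ∫ u in (0:ℝ)..t, derivWithin γ (Icc 0 1) u = γ t - γ 0 :=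
      intervalIntegral.integral_eq_sub_of_hasDeriv_right_of_le ht.1
        (hsm.continuousOn.mono (Icc_subset_Icc le_rfl ht.2)) hder hint
    calc ‖γ t - x‖ = ‖∫ u in (0:ℝ)..t, derivWithin γ (Icc 0 1) u‖ := by rw [heq, h0]
      _ ≤ ∫ u in (0:ℝ)..t, g u := intervalIntegral.norm_integral_le_integral_norm ht.1
  have hdle : ∀ t ∈ Icc (0:ℝ) 1, distBd D (γ t) ≤ d0 + s t := by
    intro t ht
    calc distBd D (γ t) ≤ distBd D x + dist (γ t) x := infDist_le_infDist_add_dist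
      _ ≤ d0 + s t := by
          rw [dist_eq_norm]
          exact add_le_add le_rfl (hγsub t ht)
  have hspos : ∀ t ∈ Icc (0:ℝ) 1, 0 < d0 + s t := fun t ht => by linarith [hsnn t ht]
  -- FTC for log (d0 + s t)
  have hFderiv : ∀ t ∈ Ioo (0:ℝ) 1,
      HasDerivWithinAt (fun u => Real.log (d0 + s u)) (g t / (d0 + s t)) (Ioi t) t := by
    intro t ht
    have htIcc : t ∈ Icc (0:ℝ) 1 := ⟨ht.1.le, ht.2.le⟩
    have hmeas : StronglyMeasurableAtFilter g (nhdsWithin t (Ioi t)) MeasureTheory.volume :=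
      ⟨Icc 0 1, Icc_mem_nhdsGT_of_mem ⟨htIcc.1, ht.2⟩,
        hgc.aestronglyMeasurable measurableSet_Icc⟩
    have hcw : ContinuousWithinAt g (Ioi t) t :=
      (hgc t htIcc).mono_of_mem_nhdsWithin (Icc_mem_nhdsGT_of_mem ⟨htIcc.1, ht.2⟩)
    have hsder : HasDerivWithinAt s (g t) (Ici t) t :=
      intervalIntegral.integral_hasDerivWithinAt_right (hgint t htIcc) hmeas hcw
    have : HasDerivWithinAt (fun u => d0 + s u) (g t) (Ici t) t := hsder.const_add d0
    have hlog := this.log (ne_of_gt (hspos t htIcc))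
    simpa using hlog.mono Ioi_subset_Ici_self
  have hFcont : ContinuousOn (fun u => Real.log (d0 + s u)) (Icc 0 1) := by
    apply ContinuousOn.log (continuousOn_const.add hscont)
    exact fun t ht => ne_of_gt (hspos t ht)
  have hquotc : ContinuousOn (fun t => g t / (d0 + s t)) (Icc 0 1) :=
    hgc.div (continuousOn_const.add hscont) (fun t ht => ne_of_gt (hspos t ht))
  have hquotint : IntervalIntegrable (fun t => g t / (d0 + s t)) MeasureTheory.volume 0 1 :=
    hquotc.intervalIntegrable_of_Icc zero_le_one
  have heq2 : ∫ t in (0:ℝ)..1, g t / (d0 + s t)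
      = Real.log (d0 + s 1) - Real.log (d0 + s 0) :=
    intervalIntegral.integral_eq_sub_of_hasDeriv_right_of_le zero_le_one hFcont hFderiv hquotint
  -- comparison with qhLength
  have hmainc : ContinuousOn (fun t => g t / distBd D (γ t)) (Icc 0 1) := by
    apply hgc.div (((continuous_infDist_pt _).comp_continuousOn hsm.continuousOn))
    exact fun t ht => ne_of_gt (distBd_pos hD hu (hmem t ht))
  have hmono : ∫ t in (0:ℝ)..1, g t / (d0 + s t) ≤ qhLength D γ := by
    apply intervalIntegral.integral_mono_on zero_le_one hquotint
      (hmainc.intervalIntegrable_of_Icc zero_le_one)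
    intro t ht
    exact div_le_div_of_nonneg_left (hgnn t) (distBd_pos hD hu (hmem t ht)) (hdle t ht)
  have hs1 : dist x y ≤ s 1 := by
    have h' := hγsub 1 ⟨zero_le_one, le_rfl⟩
    rw [h1] at h'
    rw [dist_eq_norm, ← norm_sub_rev]
    exact h'
  calc Real.log (1 + dist x y / d0)
      = Real.log ((d0 + dist x y) / d0) := by
        rw [add_div, div_self (ne_of_gt hd0)]
    _ = Real.log (d0 + dist x y) - Real.log d0 := Real.log_div (by positivity) (ne_of_gt hd0)
    _ ≤ Real.log (d0 + s 1) - Real.log d0 := by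
        have h01 : (1:ℝ) ∈ Icc (0:ℝ) 1 := ⟨zero_le_one, le_rfl⟩
        exact sub_le_sub_right (Real.log_le_log (by positivity) (by linarith)) _
    _ = ∫ t in (0:ℝ)..1, g t / (d0 + s t) := by rw [heq2, hs0, add_zero]
    _ ≤ qhLength D γ := hmono



lemma exists_isQHPath {D : Set E} (hD : IsOpen D) (hDc : IsConnected D) (hu : D ≠ univ)
    {x y : E} (hx : x ∈ D) (hy : y ∈ D) : ∃ γ : ℝ → E, IsQHPath D x y γ := by
  obtain ⟨p, hpmem⟩ : JoinedIn D x y :=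
    ((hD.isConnected_iff_isPathConnected).mp hDc).joinedIn x hx y hy
  -- minimum of boundary distance along the path
  obtain ⟨t₀, ht₀, hmin⟩ : ∃ t₀ ∈ Icc (0:ℝ) 1,
      ∀ t ∈ Icc (0:ℝ) 1, distBd D (p.extend t₀) ≤ distBd D (p.extend t) := by
    obtain ⟨t₀, ht₀, hmin⟩ := isCompact_Icc.exists_isMinOn (nonempty_Icc.mpr zero_le_one)
      ((continuous_infDist_pt _).comp_continuousOn p.continuous_extend.continuousOn)
    exact ⟨t₀, ht₀, fun t ht => hmin ht⟩
  set ε := distBd D (p.extend t₀) with hεdef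
  have hextmem : ∀ t ∈ Icc (0:ℝ) 1, p.extend t ∈ D := by
    intro t ht
    rw [p.extend_apply ht]
    exact hpmem _
  have hε : 0 < ε := distBd_pos hD hu (hextmem t₀ ht₀)
  -- uniform continuity
  obtain ⟨δ, hδ, hucont⟩ : ∃ δ > 0, ∀ a ∈ Icc (0:ℝ) 1, ∀ b ∈ Icc (0:ℝ) 1,
      dist a b < δ → dist (p.extend a) (p.extend b) < ε := by
    exact Metric.uniformContinuousOn_iff.mp
      (isCompact_Icc.uniformContinuousOn_of_continuous p.continuous_extend.continuousOn) ε hε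
  obtain ⟨n, hn1, hnδ⟩ : ∃ n : ℕ, 1 ≤ n ∧ (1:ℝ)/n < δ := by
    obtain ⟨n, hn⟩ := exists_nat_one_div_lt hδ
    exact ⟨n + 1, by omega, by push_cast; push_cast at hn; linarith⟩
  have hn0 : (0:ℝ) < n := by positivity
  set w : ℕ → E := fun i => p.extend ((i : ℝ) / n) with hwdef
  have hrep : ∀ i : ℕ, w i = p.extend (min ((i:ℝ)/n) 1) := by
    intro i
    rcases le_total ((i:ℝ)/n) 1 with h | h
    · rw [min_eq_left h]
    · rw [min_eq_right h, hwdef]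
      simp only
      rw [p.extend_of_one_le h, p.extend_of_one_le le_rfl]
  have hmemIcc : ∀ i : ℕ, min ((i:ℝ)/n) 1 ∈ Icc (0:ℝ) 1 :=
    fun i => ⟨le_min (by positivity) zero_le_one, min_le_right _ _⟩
  have hwD : ∀ i : ℕ, w i ∈ D := fun i => (hrep i) ▸ hextmem _ (hmemIcc i)
  have hεw : ∀ i : ℕ, ε ≤ distBd D (w i) := fun i => (hrep i) ▸ hmin _ (hmemIcc i)
  have hchain : ∀ i : ℕ, dist (w i) (w (i + 1)) < ε := by
    intro i
    rcases lt_or_ge i n with h | h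
    · have hi : ((i:ℝ))/n ∈ Icc (0:ℝ) 1 := ⟨by positivity, by
        rw [div_le_one hn0]; exact_mod_cast h.le⟩
      have hi1 : ((i:ℝ)+1)/n ∈ Icc (0:ℝ) 1 := ⟨by positivity, by
        rw [div_le_one hn0]; exact_mod_cast h⟩
      have : dist ((i:ℝ)/n) (((i:ℝ)+1)/n) < δ := by
        rw [Real.dist_eq]
        have e : (i:ℝ)/n - ((i:ℝ)+1)/n = -(1/n) := by field_simp; ring
        rw [e, abs_neg, abs_of_pos (by positivity)]
        exact hnδ
      have := hucont _ hi _ hi1 this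
      simpa [hwdef, Nat.cast_add, Nat.cast_one] using this
    · have h1 : (1:ℝ) ≤ (i:ℝ)/n := by
        rw [le_div_iff₀ hn0, one_mul]; exact_mod_cast h
      have h2 : (1:ℝ) ≤ ((i+1:ℕ):ℝ)/n := by
        rw [le_div_iff₀ hn0, one_mul]; push_cast; linarith [h1, (le_div_iff₀ hn0).mp h1]
      have e1 : w i = y := by rw [hwdef]; simp only; rw [p.extend_of_one_le h1]
      have e2 : w (i+1) = y := by rw [hwdef]; simp only; rw [p.extend_of_one_le h2]
      rw [e1, e2, dist_self]; exact hε
  -- the smoothed polygonal path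
  set γ : ℝ → E := fun t => w ⌊t * n⌋₊ +
      Real.smoothTransition (4 * (t * n - ⌊t * n⌋₊) - 3/2) • (w (⌊t * n⌋₊ + 1) - w ⌊t * n⌋₊)
    with hγdef
  have hseg : ∀ i : ℕ, ∀ c : ℝ, 0 ≤ c → c ≤ 1 → w i + c • (w (i+1) - w i) ∈ D := by
    intro i c hc0 hc1
    apply ball_distBd_subset hD (hwD i)
    rw [mem_ball, dist_eq_norm, add_sub_cancel_left]
    calc ‖c • (w (i+1) - w i)‖ ≤ ‖w (i+1) - w i‖ := by
          rw [norm_smul, Real.norm_eq_abs, abs_of_nonneg hc0]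
          exact mul_le_of_le_one_left (norm_nonneg _) hc1
      _ = dist (w i) (w (i+1)) := by rw [dist_eq_norm, norm_sub_rev]
      _ < ε := hchain i
      _ ≤ distBd D (w i) := hεw i
  have hmemγ : ∀ t ∈ Icc (0:ℝ) 1, γ t ∈ D := fun t _ =>
    hseg _ _ (Real.smoothTransition.nonneg _) (Real.smoothTransition.le_one _)
  have hγ0 : γ 0 = x := by
    rw [hγdef]
    simp only [zero_mul, Nat.floor_zero, Nat.cast_zero, sub_zero, mul_zero, zero_sub]
    rw [Real.smoothTransition.zero_of_nonpos (by norm_num)]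
    simp only [zero_smul, add_zero, hwdef, Nat.cast_zero, zero_div]
    exact p.extend_zero
  have hγ1 : γ 1 = y := by
    rw [hγdef]
    simp only [one_mul, Nat.floor_natCast, sub_self, mul_zero, zero_sub]
    rw [Real.smoothTransition.zero_of_nonpos (by norm_num)]
    simp only [zero_smul, add_zero, hwdef, div_self (ne_of_gt hn0)]
    exact p.extend_one
  have hsmooth : ContDiffOn ℝ 1 γ (Icc 0 1) := by
    apply contDiffOn_of_locally_contDiffOn
    intro t ht
    set v := t * (n:ℝ) with hvdef
    have hv0 : 0 ≤ v := mul_nonneg ht.1 hn0.le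
    set i0 := ⌊v⌋₊ with hi0def
    have hcaseA : ∀ i : ℕ, |v - i| < 1/4 →
        ∃ u, IsOpen u ∧ t ∈ u ∧ ContDiffOn ℝ 1 γ (Icc 0 1 ∩ u) := by
      intro i hvi
      rw [abs_lt] at hvi
      refine ⟨Ioo (((i:ℝ) - 1/4)/n) (((i:ℝ) + 1/4)/n), isOpen_Ioo,
        ⟨(div_lt_iff₀ hn0).mpr (by linarith), (lt_div_iff₀ hn0).mpr (by linarith)⟩, ?_⟩
      apply (contDiffOn_const (c := w i)).congr
      intro t' ht'
      obtain ⟨ht'Icc, ht'u⟩ := ht'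
      have hl : (i:ℝ) - 1/4 < t' * n := (div_lt_iff₀ hn0).mp ht'u.1
      have hr : t' * n < (i:ℝ) + 1/4 := (lt_div_iff₀ hn0).mp ht'u.2
      have hv'0 : 0 ≤ t' * n := mul_nonneg ht'Icc.1 hn0.le
      rcases le_or_gt (i:ℝ) (t' * n) with hge | hlt
      · have hfl : ⌊t' * (n:ℝ)⌋₊ = i := by
          rw [Nat.floor_eq_iff hv'0]
          exact ⟨hge, by push_cast; linarith⟩
        show γ t' = w i
        rw [hγdef]
        simp only [hfl]
        rw [Real.smoothTransition.zero_of_nonpos (by linarith)]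
        simp
      · have hi1 : 1 ≤ i := by
          rcases Nat.eq_zero_or_pos i with h0 | h; · subst h0; simp at hlt; linarith
          · exact h
        have hfl : ⌊t' * (n:ℝ)⌋₊ = i - 1 := by
          rw [Nat.floor_eq_iff hv'0]
          rw [Nat.cast_sub hi1]
          push_cast
          constructor <;> linarith
        show γ t' = w i
        rw [hγdef]
        simp only [hfl]
        rw [Real.smoothTransition.one_of_one_le (by
          rw [Nat.cast_sub hi1]; push_cast; linarith)]
        rw [Nat.sub_add_cancel hi1, one_smul, add_sub_cancel]
    rcases lt_or_ge (v - i0) (1/4) with hA | hge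
    · exact hcaseA i0 (by rw [abs_of_nonneg (by linarith [Nat.floor_le hv0])]; exact hA)
    rcases lt_or_ge (3/4) (v - i0) with hB | hle
    · refine hcaseA (i0 + 1) ?_
      have := Nat.lt_floor_add_one v
      rw [abs_lt]
      push_cast
      constructor <;> linarith
    · refine ⟨Ioo (((i0:ℝ) + 1/8)/n) (((i0:ℝ) + 7/8)/n), isOpen_Ioo,
        ⟨(div_lt_iff₀ hn0).mpr (by linarith), (lt_div_iff₀ hn0).mpr (by linarith)⟩, ?_⟩
      have hF : ContDiff ℝ 1 (fun t' : ℝ =>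
          w i0 + Real.smoothTransition (4 * (t' * n - i0) - 3/2) • (w (i0+1) - w i0)) := by
        refine contDiff_const.add (ContDiff.smul ?_ contDiff_const)
        exact Real.smoothTransition.contDiff.comp (by fun_prop)
      apply hF.contDiffOn.congr
      intro t' ht'
      obtain ⟨ht'Icc, ht'u⟩ := ht'
      have hl : (i0:ℝ) + 1/8 < t' * n := (div_lt_iff₀ hn0).mp ht'u.1
      have hr : t' * n < (i0:ℝ) + 7/8 := (lt_div_iff₀ hn0).mp ht'u.2
      have hfl : ⌊t' * (n:ℝ)⌋₊ = i0 := by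
        rw [Nat.floor_eq_iff (mul_nonneg ht'Icc.1 hn0.le)]
        constructor <;> push_cast <;> linarith
      rw [hγdef]
      simp only [hfl]
  exact ⟨γ, hsmooth, hγ0, hγ1, hmemγ⟩


lemma qhLength_nonneg (D : Set E) (γ : ℝ → E) : 0 ≤ qhLength D γ :=
  intervalIntegral.integral_nonneg zero_le_one
    (fun u _ => div_nonneg (norm_nonneg _) infDist_nonneg)

lemma qhDist_bddBelow (D : Set E) (x y : E) :
    BddBelow {l | ∃ γ : ℝ → E, IsQHPath D x y γ ∧ qhLength D γ = l} :=
  ⟨0, fun _ ⟨γ, _, hl⟩ => hl ▸ qhLength_nonneg D γ⟩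

lemma qhDist_lower {D : Set E} (hD : IsOpen D) (hDc : IsConnected D) (hu : D ≠ univ)
    {x y : E} (hx : x ∈ D) (hy : y ∈ D) :
    Real.log (1 + dist x y / distBd D x) ≤ qhDist D x y := by
  obtain ⟨γ₀, hγ₀⟩ := exists_isQHPath hD hDc hu hx hy
  exact le_csInf ⟨qhLength D γ₀, γ₀, hγ₀, rfl⟩
    (fun l ⟨γ, hγ, hl⟩ => hl ▸ qhLength_lower hD hu hx hγ)

lemma qhDist_upper {D : Set E} (hD : IsOpen D) (hu : D ≠ univ)
    {z1 z2 : E} (hz1 : z1 ∈ D) (h2r : 2 * dist z1 z2 ≤ distBd D z1) :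
    qhDist D z1 z2 ≤ 2 * dist z1 z2 / distBd D z1 := by
  have hd1 : 0 < distBd D z1 := distBd_pos hD hu hz1
  set d1 := distBd D z1 with hd1def
  set γ : ℝ → E := fun t => z1 + t • (z2 - z1) with hγdef
  have hudiff : UniqueDiffOn ℝ (Icc (0:ℝ) 1) := uniqueDiffOn_Icc (by norm_num)
  have hder : ∀ t : ℝ, HasDerivAt γ (z2 - z1) t := by
    intro t
    have := ((hasDerivAt_id t).smul_const (z2 - z1)).const_add z1
    rw [one_smul] at this
    exact this
  have hdw : ∀ t ∈ Icc (0:ℝ) 1, derivWithin γ (Icc 0 1) t = z2 - z1 := fun t ht =>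
    ((hder t).hasDerivWithinAt).derivWithin (hudiff t ht)
  have hmem : ∀ t ∈ Icc (0:ℝ) 1, γ t ∈ D := by
    intro t ht
    apply ball_distBd_subset hD hz1
    rw [mem_ball, hγdef]
    simp only [dist_eq_norm, add_sub_cancel_left]
    calc ‖t • (z2 - z1)‖ ≤ ‖z2 - z1‖ := by
          rw [norm_smul, Real.norm_eq_abs, abs_of_nonneg ht.1]
          exact mul_le_of_le_one_left (norm_nonneg _) ht.2
      _ = dist z1 z2 := by rw [dist_eq_norm, norm_sub_rev]
      _ < d1 := by nlinarith [dist_nonneg (x := z1) (y := z2)]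
  have hpath : IsQHPath D z1 z2 γ := by
    refine ⟨(contDiff_const.add (contDiff_id.smul contDiff_const)).contDiffOn, by simp [hγdef],
      by simp [hγdef], hmem⟩
  have hdbd : ∀ t ∈ Icc (0:ℝ) 1, d1 / 2 ≤ distBd D (γ t) := by
    intro t ht
    have h1 : d1 ≤ distBd D (γ t) + dist z1 (γ t) := infDist_le_infDist_add_dist
    have h2 : dist z1 (γ t) ≤ dist z1 z2 := by
      rw [hγdef]
      simp only [dist_eq_norm]
      have : z1 - (z1 + t • (z2 - z1)) = -(t • (z2 - z1)) := by abel
      rw [this, norm_neg, norm_smul, Real.norm_eq_abs, abs_of_nonneg ht.1, norm_sub_rev]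
      exact mul_le_of_le_one_left (norm_nonneg _) ht.2
    linarith
  have hlen : qhLength D γ ≤ 2 * dist z1 z2 / d1 := by
    have heq : qhLength D γ = ∫ t in (0:ℝ)..1, ‖z2 - z1‖ / distBd D (γ t) := by
      apply intervalIntegral.integral_congr
      intro t ht
      rw [uIcc_of_le zero_le_one] at ht
      simp only [hdw t ht]
    rw [heq]
    have hle : ∀ t ∈ Icc (0:ℝ) 1, ‖z2 - z1‖ / distBd D (γ t) ≤ 2 * dist z1 z2 / d1 := by
      intro t ht
      have hpos : 0 < distBd D (γ t) := distBd_pos hD hu (hmem t ht)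
      have : ‖z2 - z1‖ / distBd D (γ t) ≤ ‖z2 - z1‖ / (d1 / 2) :=
        div_le_div_of_nonneg_left (norm_nonneg _) (by linarith [hdbd t ht]) (hdbd t ht)
      calc ‖z2 - z1‖ / distBd D (γ t) ≤ ‖z2 - z1‖ / (d1 / 2) := this
        _ = 2 * dist z1 z2 / d1 := by
            rw [dist_eq_norm, norm_sub_rev]; field_simp
    have hcont : ContinuousOn (fun t => ‖z2 - z1‖ / distBd D (γ t)) (Icc 0 1) := by
      apply continuousOn_const.div
        ((continuous_infDist_pt _).comp_continuousOn (by fun_prop))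
      exact fun t ht => ne_of_gt (distBd_pos hD hu (hmem t ht))
    calc (∫ t in (0:ℝ)..1, ‖z2 - z1‖ / distBd D (γ t))
        ≤ ∫ _ in (0:ℝ)..1, 2 * dist z1 z2 / d1 :=
          intervalIntegral.integral_mono_on zero_le_one
            (hcont.intervalIntegrable_of_Icc zero_le_one) intervalIntegrable_const hle
      _ = 2 * dist z1 z2 / d1 := by simp
  exact le_trans (csInf_le (qhDist_bddBelow D z1 z2) ⟨γ, hpath, rfl⟩) hlen

/-- If `f : D → D'` is a homeomorphism with
`k_{D'}(f x, f y) ≤ M·k_D(x,y)` and `d_{D'}(f z) ≤ M1·d_D(z)`, then for points with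
`|z1-z2| ≤ d_D(z1)/(2M)` one has `|f z1 - f z2| ≤ 4·M·M1·|z1-z2|`. -/
theorem qh_upper_lipschitz {E' : Type*} [NormedAddCommGroup E'] [NormedSpace ℝ E']
    [CompleteSpace E'] (D : Set E) (D' : Set E')
    (hD : IsOpen D) (hDc : IsConnected D) (hDne : D ≠ univ)
    (hD' : IsOpen D') (hDc' : IsConnected D') (hDne' : D' ≠ univ)
    (f : E → E') (hbij : Set.BijOn f D D') (hcont : ContinuousOn f D)
    (M M1 : ℝ) (hM : 1 ≤ M) (hM1 : 1 ≤ M1)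
    (hqh : ∀ x ∈ D, ∀ y ∈ D, qhDist D' (f x) (f y) ≤ M * qhDist D x y)
    (hd : ∀ z ∈ D, distBd D' (f z) ≤ M1 * distBd D z) :
    ∀ z1 ∈ D, ∀ z2 ∈ D, dist z1 z2 ≤ distBd D z1 / (2 * M) →
      dist (f z1) (f z2) ≤ 4 * M * M1 * dist z1 z2 := by
  intro z1 hz1 z2 hz2 hdist
  have hM0 : (0:ℝ) < M := lt_of_lt_of_le one_pos hM
  have hd1 : 0 < distBd D z1 := distBd_pos hD hDne hz1
  set d1 := distBd D z1 with hd1def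
  set r := dist z1 z2 with hrdef
  have hr0 : 0 ≤ r := dist_nonneg
  have h2r : 2 * r ≤ d1 := by
    rw [le_div_iff₀ (by positivity)] at hdist
    nlinarith
  have hup : qhDist D z1 z2 ≤ 2 * r / d1 := qhDist_upper hD hDne hz1 h2r
  have hfz1 : f z1 ∈ D' := hbij.mapsTo hz1
  have hfz2 : f z2 ∈ D' := hbij.mapsTo hz2
  have hd0' : 0 < distBd D' (f z1) := distBd_pos hD' hDne' hfz1
  set d0' := distBd D' (f z1) with hd0'def
  set R := dist (f z1) (f z2) with hRdef
  have hR0 : 0 ≤ R := dist_nonneg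
  set c := 2 * M * r / d1 with hcdef
  have hc0 : 0 ≤ c := by positivity
  have hc1 : c ≤ 1 := by
    rw [hcdef, div_le_one hd1]
    rw [le_div_iff₀ (by positivity)] at hdist
    nlinarith
  have hklow : Real.log (1 + R / d0') ≤ c := by
    calc Real.log (1 + R / d0') ≤ qhDist D' (f z1) (f z2) :=
          qhDist_lower hD' hDc' hDne' hfz1 hfz2
      _ ≤ M * qhDist D z1 z2 := hqh z1 hz1 z2 hz2
      _ ≤ M * (2 * r / d1) := by
          apply mul_le_mul_of_nonneg_left hup hM0.le
      _ = c := by rw [hcdef]; ring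
  have hexp : 1 + R / d0' ≤ Real.exp c := by
    rw [← Real.log_le_iff_le_exp (by positivity)]
    exact hklow
  have hexpc : Real.exp c ≤ 1 + 2 * c := by
    have hcvx := convexOn_exp.2 (mem_univ (0:ℝ)) (mem_univ (1:ℝ))
      (by linarith : (0:ℝ) ≤ 1 - c) hc0 (by ring : (1 - c) + c = 1)
    simp only [smul_eq_mul, mul_zero, mul_one, zero_add, Real.exp_zero] at hcvx
    have he : Real.exp 1 ≤ 3 := by
      have := Real.exp_one_lt_d9
      linarith
    nlinarith
  have hRle : R ≤ 2 * c * d0' := by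
    have : R / d0' ≤ 2 * c := by linarith
    rw [div_le_iff₀ hd0'] at this
    linarith
  have hd0d1 : d0' ≤ M1 * d1 := hd z1 hz1
  have : 2 * c * d0' ≤ 4 * M * M1 * r := by
    rw [hcdef]
    rw [show 2 * (2 * M * r / d1) * d0' = 4 * M * r * d0' / d1 from by ring]
    rw [div_le_iff₀ hd1]
    nlinarith [mul_le_mul_of_nonneg_left hd0d1 (by positivity : (0:ℝ) ≤ 4 * M * r)]
  linarith
end
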